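/- arXiv:2106.05650 — 7 statements merged into one kernel-verified Lean document; each statement's English description precedes it below -/
import Mathlib

section
/- The Beltrami-Klein map f is injective on the closed upper half-plane {z ∈ ℂ : Im(z) ≥ 0}. -/
/-- The Beltrami-Klein map `f(z) = 1 - 2(1 + i·Re z)/(1 + |z|²)`. -/
noncomputable def bkMap (z : ℂ) : ℂ :=
  1 - 2 * (1 + Complex.I * z.re) / (1 + ‖z‖ ^ 2)

theorem bkMap_injOn_upper_half_plane : Set.InjOn bkMap {z : ℂ | 0 ≤ z.im} := by
  intro z hz w hw h
  simp only [Set.mem_setOf_eq] at hz hw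
  have hz0 : (0:ℝ) < 1 + ‖z‖ ^ 2 := by positivity
  have hw0 : (0:ℝ) < 1 + ‖w‖ ^ 2 := by positivity
  have hzsq : ‖z‖ ^ 2 = z.re ^ 2 + z.im ^ 2 := by
    rw [Complex.sq_norm, Complex.normSq_apply]; ring
  have hwsq : ‖w‖ ^ 2 = w.re ^ 2 + w.im ^ 2 := by
    rw [Complex.sq_norm, Complex.normSq_apply]; ring
  have hz0' : (1 + (‖z‖:ℂ) ^ 2) ≠ 0 := by
    intro hc
    rw [← Complex.ofReal_pow] at hc
    have : (1 + ‖z‖ ^ 2 : ℝ) = 0 := by exact_mod_cast hc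
    linarith
  have hw0' : (1 + (‖w‖:ℂ) ^ 2) ≠ 0 := by
    intro hc
    rw [← Complex.ofReal_pow] at hc
    have : (1 + ‖w‖ ^ 2 : ℝ) = 0 := by exact_mod_cast hc
    linarith
  unfold bkMap at h
  field_simp at h
  rw [show ((‖z‖:ℂ))^2 = ((‖z‖ ^2 : ℝ):ℂ) by push_cast; ring,
      show ((‖w‖:ℂ))^2 = ((‖w‖ ^2 : ℝ):ℂ) by push_cast; ring] at h
  set a := ‖z‖ ^ 2 with ha
  set b := ‖w‖ ^ 2 with hb
  have hre := congrArg Complex.re h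
  have him := congrArg Complex.im h
  simp only [Complex.add_re, Complex.sub_re, Complex.mul_re, Complex.mul_im,
    Complex.add_im, Complex.sub_im, Complex.one_re, Complex.one_im,
    Complex.ofReal_re, Complex.ofReal_im, Complex.I_re, Complex.I_im] at hre him
  norm_num at hre him
  have habs : a = b := by nlinarith
  rw [habs] at him
  have hx : z.re = w.re := by
    have h1b : (0:ℝ) < 1 + b := hw0
    have := mul_right_cancel₀ (ne_of_gt h1b) (him.trans (mul_comm _ _))
    linarith
  have h2 : z.im ^ 2 = w.im ^ 2 := by
    rw [hx] at hzsq
    linarith [hzsq, hwsq, habs]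
  have hy : z.im = w.im := by
    nlinarith [h2, sq_nonneg (z.im - w.im), sq_nonneg (z.im + w.im)]
  exact Complex.ext hx hy
end

section
/- |f(z)| = 1 if and only if z is real, where f is the Beltrami-Klein map. -/
theorem bkMap_abs_eq_one_iff (z : ℂ) : ‖bkMap z‖ = 1 ↔ z.im = 0 := by
  set d : ℝ := 1 + ‖z‖ ^ 2 with hdef
  have habs : ‖z‖ ^ 2 = z.re ^ 2 + z.im ^ 2 := by
    rw [Complex.sq_norm, Complex.normSq_apply]; ring
  have hd : (0:ℝ) < d := by positivity
  have hd' : d ≠ 0 := ne_of_gt hd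
  have hdC : ((d : ℂ)) ≠ 0 := by exact_mod_cast hd'
  have hz : bkMap z = ((1 - 2/d : ℝ) : ℂ) + ((-(2*z.re)/d : ℝ) : ℂ) * Complex.I := by
    unfold bkMap
    have : (1 + ((‖z‖ : ℝ) : ℂ) ^ 2) = (d : ℂ) := by rw [hdef]; push_cast; ring
    rw [this]
    field_simp
    push_cast
    ring_nf
    field_simp
    ring
  have hre : (bkMap z).re = 1 - 2/d := by simp [hz]
  have him : (bkMap z).im = -(2*z.re)/d := by simp [hz]
  have key : ‖bkMap z‖ ^ 2 = 1 ↔ z.im = 0 := by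
    rw [Complex.sq_norm, Complex.normSq_apply, hre, him]
    constructor
    · intro h
      have h2 : z.im ^ 2 = 0 := by
        field_simp at h
        nlinarith [sq_nonneg z.im, sq_nonneg z.re, habs]
      exact pow_eq_zero_iff (n := 2) (by norm_num) |>.mp h2
    · intro h
      have hdd : d = 1 + z.re ^ 2 := by rw [hdef, habs, h]; ring
      rw [hdd] at *
      field_simp
      ring
  constructor
  · intro h
    exact key.mp (by rw [h]; norm_num)
  · intro h
    have := key.mpr h
    nlinarith [norm_nonneg (bkMap z)]
end

section
/- Let H be a complex inner product space, and let x, y ∈ H with x ≠ 0 and y ≠ 0. Let w = (‖y‖/‖x‖)·exp(i·arccos(Re⟨y, x⟩/(‖y‖·‖x‖))). Then f(w) = (‖y‖² - ‖x‖² - i·(⟨y, x⟩ + ⟨x, y⟩)) / (‖x‖² + ‖y‖²). -/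
open scoped InnerProductSpace

theorem bkMap_polar_point {H : Type*} [NormedAddCommGroup H] [InnerProductSpace ℂ H]
    (x y : H) (hx : x ≠ 0) (hy : y ≠ 0) :
    bkMap (((‖y‖ / ‖x‖ : ℝ) : ℂ) *
        Complex.exp (Complex.I * (Real.arccos ((⟪x, y⟫_ℂ).re / (‖y‖ * ‖x‖)) : ℝ))) =
      (((‖y‖ ^ 2 - ‖x‖ ^ 2 : ℝ) : ℂ) - Complex.I * (⟪x, y⟫_ℂ + ⟪y, x⟫_ℂ)) /
        ((‖x‖ ^ 2 + ‖y‖ ^ 2 : ℝ) : ℂ) := by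
  have ha : (0:ℝ) < ‖x‖ := norm_pos_iff.mpr hx
  have hb : (0:ℝ) < ‖y‖ := norm_pos_iff.mpr hy
  set a : ℝ := ‖x‖ with haa
  set b : ℝ := ‖y‖ with hbb
  set c : ℝ := (⟪x, y⟫_ℂ).re with hcc
  have hcs : |c| ≤ b * a := by
    calc |c| ≤ ‖⟪x, y⟫_ℂ‖ := Complex.abs_re_le_norm _
    _ = ‖⟪x, y⟫_ℂ‖ := rfl
    _ ≤ a * b := norm_inner_le_norm x y
    _ = b * a := mul_comm _ _
  have hba : (0:ℝ) < b * a := mul_pos hb ha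
  have h1 : |c / (b * a)| ≤ 1 := by
    rw [abs_div, abs_of_pos hba]
    exact div_le_one_of_le₀ hcs hba.le
  rw [abs_le] at h1
  have hcos : Real.cos (Real.arccos (c / (b * a))) = c / (b * a) :=
    Real.cos_arccos h1.1 h1.2
  set θ : ℝ := Real.arccos (c / (b * a)) with hθ
  have habs : ‖((b / a : ℝ):ℂ) * Complex.exp (Complex.I * (θ:ℝ))‖ = b / a := by
    rw [norm_mul, Complex.norm_exp]
    simp [abs_of_pos ha, abs_of_pos hb, abs_of_pos (div_pos hb ha)]
  have hre : ((((b / a : ℝ):ℂ) * Complex.exp (Complex.I * (θ:ℝ))).re) = c / a ^ 2 := by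
    rw [mul_comm Complex.I, Complex.exp_mul_I, ← Complex.ofReal_cos, ← Complex.ofReal_sin, hcos]
    simp only [Complex.mul_re, Complex.add_re, Complex.mul_im, Complex.add_im,
      Complex.ofReal_re, Complex.ofReal_im, Complex.I_re, Complex.I_im]
    field_simp
    ring
  have hsum : ⟪x, y⟫_ℂ + ⟪y, x⟫_ℂ = ((2*c : ℝ) : ℂ) := by
    rw [← inner_conj_symm y x, Complex.add_conj]
  rw [bkMap, habs, hre, hsum]
  have ha' : (a:ℂ) ≠ 0 := by exact_mod_cast ha.ne'
  have hab : ((a^2 + b^2 : ℝ) : ℂ) ≠ 0 := by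
    exact_mod_cast (by positivity : (a^2 + b^2 : ℝ) ≠ 0)
  have hab' : ((a:ℂ)^2 + (b:ℂ)^2) ≠ 0 := by push_cast at hab; exact hab
  push_cast
  field_simp [ha', hab']
  ring
end

section
/- Let A be an n×n complex matrix and let W(A) = { ⟨Av, v⟩ : ‖v‖ = 1 } be its numerical range. Then W(A) is a convex subset of ℂ (Toeplitz–Hausdorff theorem). -/
open scoped InnerProductSpace

open Set in
/-- Key lemma: if the numerical range of a linear operator contains `0` and `1`
(attained at unit vectors), it contains all of `[0,1]`. -/
lemma numerical_range_key {n : ℕ} (T : EuclideanSpace ℂ (Fin n) →ₗ[ℂ] EuclideanSpace ℂ (Fin n))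
    (u v : EuclideanSpace ℂ (Fin n)) (hu : ‖u‖ = 1) (hv : ‖v‖ = 1)
    (h0 : ⟪u, T u⟫_ℂ = 0) (h1 : ⟪v, T v⟫_ℂ = 1)
    (t : ℝ) (ht0 : 0 ≤ t) (ht1 : t ≤ 1) :
    ∃ x : EuclideanSpace ℂ (Fin n), ‖x‖ = 1 ∧ ⟪x, T x⟫_ℂ = (t : ℂ) := by
  classical
  set p : ℂ := ⟪u, T v⟫_ℂ with hp
  set q : ℂ := ⟪v, T u⟫_ℂ with hq
  set d : ℂ := p - (starRingEnd ℂ) q with hd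
  set c : ℂ := if d = 0 then 1 else d / ((‖d‖ : ℝ) : ℂ) with hc
  have hcabs : ‖c‖ = 1 := by
    by_cases h : d = 0
    · simp [hc, h]
    · simp only [hc, if_neg h, norm_div, Complex.norm_real, norm_norm]
      field_simp [norm_ne_zero_iff.mpr h]
  have hcne : c ≠ 0 := by
    intro h; rw [h] at hcabs; simp at hcabs
  -- phase-rotated u
  set u' : EuclideanSpace ℂ (Fin n) := c • u with hu'
  have hu'norm : ‖u'‖ = 1 := by
    rw [hu', norm_smul, hu, mul_one, hcabs]
  have h0' : ⟪u', T u'⟫_ℂ = 0 := by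
    simp [hu', inner_smul_left, inner_smul_right, map_smul, h0]
  -- the cross term is real
  have hcross : ((starRingEnd ℂ) c * p + c * q).im = 0 := by
    have key : (starRingEnd ℂ) c * p + c * q
        = (starRingEnd ℂ) c * d + ((2 * (c * q).re : ℝ) : ℂ) := by
      rw [← Complex.add_conj (c * q), map_mul, hd]
      ring
    have hcd : ((starRingEnd ℂ) c * d).im = 0 := by
      by_cases h : d = 0
      · simp [h]
      · have : (starRingEnd ℂ) c * d = ((‖d‖ : ℝ) : ℂ) := by
          rw [hc, if_neg h, map_div₀, Complex.conj_ofReal, div_mul_eq_mul_div, mul_comm,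
            Complex.mul_conj, Complex.normSq_eq_norm_sq]
          push_cast
          rw [sq, mul_div_assoc, div_self (by exact_mod_cast norm_ne_zero_iff.mpr h), mul_one]
        rw [this]; simp
    rw [key]
    simp [Complex.add_im, hcd]
  set p' : ℂ := ⟪u', T v⟫_ℂ with hp'
  set q' : ℂ := ⟪v, T u'⟫_ℂ with hq'
  have hp'q' : p' + q' = (starRingEnd ℂ) c * p + c * q := by
    rw [hp', hq', hu', inner_smul_left, map_smul, inner_smul_right, ← hp, ← hq]
  have hcrossim : (p' + q').im = 0 := by rw [hp'q']; exact hcross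
  -- the path
  set x : ℝ → EuclideanSpace ℂ (Fin n) :=
    fun s => ((1 - s : ℝ) : ℂ) • u' + ((s : ℝ) : ℂ) • v with hx
  have hexp : ∀ s : ℝ, ⟪x s, T (x s)⟫_ℂ
      = (((1 - s) * s : ℝ) : ℂ) * (p' + q') + (((s * s : ℝ)) : ℂ) := by
    intro s
    simp only [hx, map_add, map_smul, inner_add_left, inner_add_right,
      inner_smul_left, inner_smul_right, Complex.conj_ofReal, h0', h1, ← hp', ← hq']
    push_cast
    ring
  have hxne : ∀ s ∈ Icc (0:ℝ) 1, x s ≠ 0 := by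
    intro s hs hzero
    rcases eq_or_lt_of_le hs.1 with h0s | h0s
    · rw [hx] at hzero
      simp only [← h0s] at hzero
      norm_num at hzero
      rw [hzero] at hu'norm; simp at hu'norm
    rcases eq_or_lt_of_le hs.2 with h1s | h1s
    · rw [hx] at hzero
      simp only [h1s] at hzero
      norm_num at hzero
      rw [hzero] at hv; simp at hv
    -- 0 < s < 1 : then v = -u'
    have heq : ((s : ℝ) : ℂ) • v = -(((1 - s : ℝ) : ℂ) • u') := by
      rw [hx] at hzero
      linear_combination (norm := module) hzero
    have hnorms : s = 1 - s := by
      have := congrArg norm heq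
      rw [norm_neg, norm_smul, norm_smul, hv, hu'norm, mul_one, mul_one,
        Complex.norm_real, Complex.norm_real, Real.norm_eq_abs, Real.norm_eq_abs,
        abs_of_pos h0s, abs_of_pos (by linarith : (0:ℝ) < 1 - s)] at this
      linarith
    have hs2 : s = 1 / 2 := by linarith
    have hveq' : v = -u' := by
      have h2 := congrArg (fun y => (2 : ℂ) • y) heq
      rw [hs2] at h2
      simp only [smul_smul, smul_neg] at h2
      norm_num at h2
      exact h2
    have : ⟪v, T v⟫_ℂ = 0 := by
      rw [hveq']
      simp [inner_neg_neg, h0']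
    rw [h1] at this
    exact one_ne_zero this
  -- continuity
  have hTcont : Continuous T := T.continuous_of_finiteDimensional
  have hxcont : Continuous x := by
    apply Continuous.add
    · exact (Complex.continuous_ofReal.comp (continuous_const.sub continuous_id)).smul
        continuous_const
    · exact (Complex.continuous_ofReal.comp continuous_id).smul continuous_const
  have hinnercont : Continuous fun s => ⟪x s, T (x s)⟫_ℂ :=
    Continuous.inner hxcont (hTcont.comp hxcont)
  set g : ℝ → ℝ := fun s => (⟪x s, T (x s)⟫_ℂ).re / ‖x s‖ ^ 2 with hg
  have hgcont : ContinuousOn g (Icc 0 1) := by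
    apply ContinuousOn.div
    · exact (Complex.continuous_re.comp hinnercont).continuousOn
    · exact ((hxcont.norm).pow 2).continuousOn
    · intro s hs
      exact pow_ne_zero 2 (norm_ne_zero_iff.mpr (hxne s hs))
  have hx0 : x 0 = u' := by rw [hx]; norm_num
  have hx1 : x 1 = v := by rw [hx]; norm_num
  have hg0 : g 0 = 0 := by
    show (⟪x 0, T (x 0)⟫_ℂ).re / ‖x 0‖ ^ 2 = 0
    rw [hx0, h0']
    simp
  have hg1 : g 1 = 1 := by
    show (⟪x 1, T (x 1)⟫_ℂ).re / ‖x 1‖ ^ 2 = 1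
    rw [hx1, h1, hv]
    norm_num
  have hIVT := intermediate_value_Icc (le_of_lt one_pos) hgcont
  rw [hg0, hg1] at hIVT
  obtain ⟨s, hs, hgs⟩ := hIVT ⟨ht0, ht1⟩
  -- the witness
  have hxs : ‖x s‖ ≠ 0 := norm_ne_zero_iff.mpr (hxne s hs)
  refine ⟨((‖x s‖⁻¹ : ℝ) : ℂ) • x s, ?_, ?_⟩
  · rw [norm_smul, Complex.norm_real, Real.norm_eq_abs,
      abs_of_nonneg (by positivity), inv_mul_cancel₀ hxs]
  · have him : (⟪x s, T (x s)⟫_ℂ).im = 0 := by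
      rw [hexp s]
      simp [hcrossim]
    have hre : ⟪x s, T (x s)⟫_ℂ = ((g s * ‖x s‖ ^ 2 : ℝ) : ℂ) := by
      apply Complex.ext
      · show _ = (⟪x s, T (x s)⟫_ℂ).re / ‖x s‖ ^ 2 * ‖x s‖ ^ 2
        rw [div_mul_cancel₀ _ (pow_ne_zero 2 hxs)]
      · rw [him, Complex.ofReal_im]
    rw [map_smul, inner_smul_left, inner_smul_right, Complex.conj_ofReal, hre, hgs]
    have hr : (‖x s‖⁻¹ : ℝ) * (‖x s‖⁻¹ * (t * ‖x s‖ ^ 2)) = t := by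
      field_simp
    exact_mod_cast congrArg Complex.ofReal hr

open Set in
/-- Toeplitz–Hausdorff theorem: the numerical range of a complex matrix is convex. -/
theorem numerical_range_convex {n : ℕ} (A : Matrix (Fin n) (Fin n) ℂ) :
    Convex ℝ {w : ℂ | ∃ v : EuclideanSpace ℂ (Fin n), ‖v‖ = 1 ∧
      w = ⟪v, Matrix.toEuclideanLin A v⟫_ℂ} := by
  rintro w₀ ⟨u, hu, hw₀⟩ w₁ ⟨v, hv, hw₁⟩ a b ha hb hab
  by_cases hww : w₀ = w₁
  · refine ⟨u, hu, ?_⟩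
    rw [← hw₀, hww, ← add_smul, hab, one_smul]
  · -- affine renormalization
    set c : ℂ := (w₁ - w₀)⁻¹ with hcdef
    set e : ℂ := -w₀ * (w₁ - w₀)⁻¹ with hedef
    have hwne : w₁ - w₀ ≠ 0 := sub_ne_zero.mpr (Ne.symm hww)
    set T : EuclideanSpace ℂ (Fin n) →ₗ[ℂ] EuclideanSpace ℂ (Fin n) :=
      c • Matrix.toEuclideanLin A + e • LinearMap.id with hT
    have hTval : ∀ x : EuclideanSpace ℂ (Fin n), ‖x‖ = 1 →
        ⟪x, T x⟫_ℂ = c * ⟪x, Matrix.toEuclideanLin A x⟫_ℂ + e := by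
      intro x hx
      rw [hT]
      simp only [LinearMap.add_apply, LinearMap.smul_apply, LinearMap.id_apply,
        inner_add_right, inner_smul_right]
      rw [inner_self_eq_norm_sq_to_K, hx]
      push_cast
      ring
    have h0 : ⟪u, T u⟫_ℂ = 0 := by
      rw [hTval u hu, ← hw₀, hcdef, hedef]
      field_simp
      ring
    have h1 : ⟪v, T v⟫_ℂ = 1 := by
      rw [hTval v hv, ← hw₁, hcdef, hedef]
      field_simp
      ring
    obtain ⟨x, hx, hxval⟩ := numerical_range_key T u v hu hv h0 h1 b hb (by linarith)
    refine ⟨x, hx, ?_⟩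
    rw [hTval x hx] at hxval
    set I : ℂ := ⟪x, Matrix.toEuclideanLin A x⟫_ℂ with hI
    have hcinv : c * (w₁ - w₀) = 1 := by rw [hcdef]; field_simp
    have hval : I = ((b : ℂ) - e) * (w₁ - w₀) := by
      linear_combination (w₁ - w₀) * hxval - I * hcinv
    have hab' : (a : ℂ) = 1 - (b : ℂ) := by
      have : a = 1 - b := by linarith
      rw [this]; push_cast; ring
    rw [hval, hedef, Complex.real_smul, Complex.real_smul, hab']
    field_simp
    ring
end

section
/- Let A and B be n×n real symmetric matrices with n ≠ 2. Then the set { xᵀAx + i·xᵀBx : x ∈ ℝⁿ, xᵀx = 1 } is convex. -/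
open Matrix

namespace BrickmanAux

variable {n : ℕ}


/-- Level set of a diagonal quadratic form on the unit sphere. -/
def S (μ : Fin n → ℝ) : Set (Fin n → ℝ) :=
  {z | ∑ i, z i ^ 2 = 1 ∧ ∑ i, μ i * z i ^ 2 = 0}

lemma joined_of_compat {μ z w : Fin n → ℝ} (hz : z ∈ S μ) (hw : w ∈ S μ)
    (h : ∀ i, 0 ≤ z i * w i) : JoinedIn (S μ) z w := by
  set f : ℝ → Fin n → ℝ := fun t j =>
    (if 0 ≤ z j + w j then 1 else -1) * Real.sqrt ((1 - t) * z j ^ 2 + t * w j ^ 2) with hf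
  have hcont : Continuous f := by
    apply continuous_pi
    intro j
    exact continuous_const.mul (Real.continuous_sqrt.comp (by continuity))
  have key : ∀ t : ℝ, 0 ≤ t → t ≤ 1 → f t ∈ S μ := by
    intro t ht0 ht1
    have hsq : ∀ j, f t j ^ 2 = (1 - t) * z j ^ 2 + t * w j ^ 2 := by
      intro j
      have h0 : (0:ℝ) ≤ (1 - t) * z j ^ 2 + t * w j ^ 2 :=
        add_nonneg (mul_nonneg (by linarith) (sq_nonneg _)) (mul_nonneg ht0 (sq_nonneg _))
      rw [hf]; dsimp only
      rw [mul_pow, Real.sq_sqrt h0]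
      rcases le_or_gt 0 (z j + w j) with h' | h' <;> simp [h', not_le.mpr]
    constructor
    · rw [Finset.sum_congr rfl fun j _ => hsq j, Finset.sum_add_distrib,
        ← Finset.mul_sum, ← Finset.mul_sum, hz.1, hw.1]
      ring
    · have h2 : ∀ j, μ j * f t j ^ 2 = (1 - t) * (μ j * z j ^ 2) + t * (μ j * w j ^ 2) :=
        fun j => by rw [hsq]; ring
      rw [Finset.sum_congr rfl fun j _ => h2 j, Finset.sum_add_distrib,
        ← Finset.mul_sum, ← Finset.mul_sum, hz.2, hw.2]
      ring
  have h0 : f 0 = z := by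
    funext j
    rw [hf]; dsimp only
    have : (1 - (0:ℝ)) * z j ^ 2 + 0 * w j ^ 2 = z j ^ 2 := by ring
    rw [this, Real.sqrt_sq_eq_abs]
    rcases lt_trichotomy (z j) 0 with hj | hj | hj
    · have hwj : w j ≤ 0 := by nlinarith [h j]
      rw [if_neg (by linarith), abs_of_neg hj]; ring
    · simp [hj]
    · have hwj : 0 ≤ w j := by nlinarith [h j]
      rw [if_pos (by linarith), abs_of_pos hj]; ring
  have h1 : f 1 = w := by
    funext j
    rw [hf]; dsimp only
    have : (1 - (1:ℝ)) * z j ^ 2 + 1 * w j ^ 2 = w j ^ 2 := by ring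
    rw [this, Real.sqrt_sq_eq_abs]
    rcases lt_trichotomy (w j) 0 with hj | hj | hj
    · have hzj : z j ≤ 0 := by nlinarith [h j]
      rw [if_neg (by linarith), abs_of_neg hj]; ring
    · simp [hj]
    · have hzj : 0 ≤ z j := by nlinarith [h j]
      rw [if_pos (by linarith), abs_of_pos hj]; ring
  exact JoinedIn.ofLine hcont.continuousOn h0 h1 (fun p hp => by obtain ⟨t, ht, rfl⟩ := hp; exact key t ht.1 ht.2)

-- part b
-- part b
lemma sum_support_pair {a b : Fin n} (hab : a ≠ b) {h : Fin n → ℝ}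
    (h0 : ∀ j, j ≠ a → j ≠ b → h j = 0) : ∑ j, h j = h a + h b := by
  rw [← Finset.sum_pair hab]
  refine (Finset.sum_subset (Finset.subset_univ _) ?_).symm
  intro x _ hx
  simp only [Finset.mem_insert, Finset.mem_singleton, not_or] at hx
  exact h0 x hx.1 hx.2

lemma sum_single_point (a : Fin n) {h : Fin n → ℝ}
    (h0 : ∀ j, j ≠ a → h j = 0) : ∑ j, h j = h a := by
  exact Finset.sum_eq_single a (fun j _ hj => h0 j hj) (fun ha => absurd (Finset.mem_univ a) ha)

lemma exists_mem_zero {μ : Fin n → ℝ} {a b i : Fin n} (ha : a ≠ i) (hb : b ≠ i)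
    (hμa : μ a ≤ 0) (hμb : 0 ≤ μ b) : ∃ u ∈ S μ, u i = 0 := by
  classical
  rcases eq_or_lt_of_le hμa with hza | hna
  · -- μ a = 0 : use the coordinate vector at a
    refine ⟨fun j => if j = a then 1 else 0, ⟨?_, ?_⟩, if_neg (Ne.symm ha)⟩
    · rw [sum_single_point a (fun j hj => by simp [if_neg hj])]; simp
    · rw [sum_single_point a (fun j hj => by simp [if_neg hj])]; simp [← hza]
  · rcases eq_or_lt_of_le hμb with hzb | hpb
    · refine ⟨fun j => if j = b then 1 else 0, ⟨?_, ?_⟩, if_neg (Ne.symm hb)⟩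
      · rw [sum_single_point b (fun j hj => by simp [if_neg hj])]; simp
      · rw [sum_single_point b (fun j hj => by simp [if_neg hj])]; simp [← hzb]
    · -- μ a < 0 < μ b
      have hab : a ≠ b := fun h => absurd (h ▸ hpb) (not_lt.mpr (le_of_lt hna))
      have ht : (0:ℝ) < μ b - μ a := by linarith
      set ca := Real.sqrt (μ b / (μ b - μ a)) with hca
      set cb := Real.sqrt (-μ a / (μ b - μ a)) with hcb
      have hca2 : ca ^ 2 = μ b / (μ b - μ a) :=
        Real.sq_sqrt (div_nonneg (by linarith) (by linarith))
      have hcb2 : cb ^ 2 = -μ a / (μ b - μ a) :=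
        Real.sq_sqrt (div_nonneg (by linarith) (by linarith))
      refine ⟨fun j => if j = a then ca else if j = b then cb else 0, ⟨?_, ?_⟩, ?_⟩
      · rw [sum_support_pair hab (fun j hja hjb => by simp [if_neg hja, if_neg hjb])]
        simp only [if_pos rfl, if_neg hab, if_neg (Ne.symm hab), if_true]
        rw [hca2, hcb2]
        field_simp
        ring
      · rw [sum_support_pair hab (h := fun j => μ j * (if j = a then ca else if j = b then cb else 0) ^ 2)
          (fun j hja hjb => by simp [if_neg hja, if_neg hjb])]
        simp only [if_pos rfl, if_neg hab, if_neg (Ne.symm hab), if_true]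
        rw [hca2, hcb2]
        field_simp
        ring
      · simp only []
        rw [if_neg (Ne.symm ha), if_neg (Ne.symm hb)]



variable {μ : Fin n → ℝ}

def flipD (D : Finset (Fin n)) (z : Fin n → ℝ) : Fin n → ℝ :=
  fun j => if j ∈ D then -z j else z j

lemma flipD_sq (D : Finset (Fin n)) (z : Fin n → ℝ) (j : Fin n) :
    flipD D z j ^ 2 = z j ^ 2 := by
  unfold flipD; split <;> ring

lemma mem_S_flipD {z : Fin n → ℝ} (hz : z ∈ S μ) (D : Finset (Fin n)) :
    flipD D z ∈ S μ := by
  constructor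
  · rw [Finset.sum_congr rfl fun j _ => flipD_sq D z j]; exact hz.1
  · rw [Finset.sum_congr rfl fun j _ => by rw [flipD_sq D z j]]; exact hz.2

lemma neg_mem_S {z : Fin n → ℝ} (hz : z ∈ S μ) : -z ∈ S μ := by
  constructor
  · rw [Finset.sum_congr rfl fun j _ => by
      show (-z) j ^ 2 = z j ^ 2; simp]; exact hz.1
  · rw [Finset.sum_congr rfl fun j _ => by
      show μ j * (-z) j ^ 2 = μ j * z j ^ 2; simp]; exact hz.2

lemma joined_flip {z : Fin n → ℝ} (hz : z ∈ S μ) {i : Fin n}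
    (hu : ∃ u ∈ S μ, u i = 0) :
    JoinedIn (S μ) z (flipD {i} z) := by
  classical
  obtain ⟨u, huS, hui⟩ := hu
  set u' : Fin n → ℝ := fun j => if z j < 0 then -|u j| else |u j| with hu'
  have hu'sq : ∀ j, u' j ^ 2 = u j ^ 2 := by
    intro j; rw [hu']; dsimp only; split <;> simp [sq_abs]
  have hu'S : u' ∈ S μ := by
    constructor
    · rw [Finset.sum_congr rfl fun j _ => hu'sq j]; exact huS.1
    · rw [Finset.sum_congr rfl fun j _ => by rw [hu'sq j]]; exact huS.2
  have hc1 : ∀ j, 0 ≤ z j * u' j := by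
    intro j; rw [hu']; dsimp only
    rcases lt_or_ge (z j) 0 with h | h
    · rw [if_pos h, mul_neg]
      exact neg_nonneg.mpr (mul_nonpos_of_nonpos_of_nonneg h.le (abs_nonneg _))
    · rw [if_neg (not_lt.mpr h)]
      exact mul_nonneg h (abs_nonneg _)
  have hc2 : ∀ j, 0 ≤ flipD {i} z j * u' j := by
    intro j
    rcases eq_or_ne j i with rfl | hji
    · have : u' j = 0 := by rw [hu']; dsimp only; rw [hui, abs_zero]; split <;> ring
      rw [this, mul_zero]
    · have : flipD {i} z j = z j := by
        unfold flipD; rw [if_neg (by simpa using hji)]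
      rw [this]; exact hc1 j
  exact (joined_of_compat hz hu'S hc1).trans
    ((joined_of_compat (mem_S_flipD hz {i}) hu'S hc2).symm)

lemma joined_flipD {z : Fin n → ℝ} (hz : z ∈ S μ) (D : Finset (Fin n))
    (h : ∀ i ∈ D, ∃ u ∈ S μ, u i = 0) : JoinedIn (S μ) z (flipD D z) := by
  classical
  induction D using Finset.induction_on with
  | empty =>
    have he : flipD (∅ : Finset (Fin n)) z = z := funext fun j => by unfold flipD; simp
    rw [he]; exact JoinedIn.refl hz
  | @insert a D ha ih =>
    have step : JoinedIn (S μ) (flipD D z) (flipD {a} (flipD D z)) :=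
      joined_flip (mem_S_flipD hz D) (h a (Finset.mem_insert_self a D))
    have heq : flipD {a} (flipD D z) = flipD (insert a D) z := by
      funext j
      unfold flipD
      rcases eq_or_ne j a with rfl | hja
      · simp [ha]
      · simp [hja, Finset.mem_insert]
    exact (ih (fun i hi => h i (Finset.mem_insert_of_mem hi))).trans (heq ▸ step)

lemma joined_of_flippable {x y : Fin n → ℝ} (hx : x ∈ S μ) (hy : y ∈ S μ)
    (h : ∀ i, x i * y i < 0 → ∃ u ∈ S μ, u i = 0) : JoinedIn (S μ) x y := by
  classical
  set D : Finset (Fin n) := Finset.univ.filter (fun i => x i * y i < 0) with hD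
  have h1 : JoinedIn (S μ) x (flipD D x) :=
    joined_flipD hx D (fun i hi => h i (by simpa [hD] using hi))
  refine h1.trans (joined_of_compat (mem_S_flipD hx D) hy ?_)
  intro i
  unfold flipD
  by_cases hi : x i * y i < 0
  · rw [if_pos (by simp [hD, hi])]
    nlinarith
  · rw [if_neg (by simp [hD, hi])]
    exact not_lt.mp hi

lemma third_index (hn : n ≠ 2) {i j : Fin n} (hij : i ≠ j) :
    ∃ k : Fin n, k ≠ i ∧ k ≠ j := by
  classical
  have h2 : ({i, j} : Finset (Fin n)).card = 2 := Finset.card_pair hij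
  have hne : ({i, j} : Finset (Fin n)) ≠ Finset.univ := by
    intro h
    rw [h, Finset.card_univ, Fintype.card_fin] at h2
    exact hn h2
  obtain ⟨k, _, hk⟩ :=
    Finset.exists_of_ssubset ((Finset.subset_univ _).ssubset_of_ne hne)
  simp only [Finset.mem_insert, Finset.mem_singleton, not_or] at hk
  exact ⟨k, hk.1, hk.2⟩

lemma main_pos (hn : n ≠ 2) {x y : Fin n → ℝ} (hx : x ∈ S μ) (hy : y ∈ S μ)
    (i₀ : Fin n) (hpos : ∀ k, k ≠ i₀ → 0 < μ k) :
    JoinedIn (S μ) x y ∨ JoinedIn (S μ) x (-y) := by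
  classical
  by_cases hxs : ∀ k, k ≠ i₀ → x k = 0
  · -- `x` is supported at `i₀` only
    have hxi : x i₀ ^ 2 = 1 := by
      have := hx.1
      rwa [sum_single_point i₀ (fun j hj => by rw [hxs j hj]; ring)] at this
    have hμi : μ i₀ = 0 := by
      have := hx.2
      rw [sum_single_point i₀ (fun j hj => by rw [hxs j hj]; ring), hxi, mul_one] at this
      exact this
    have hterm : ∀ j ∈ Finset.univ, 0 ≤ μ j * y j ^ 2 := by
      intro j _
      rcases eq_or_ne j i₀ with rfl | hj
      · rw [hμi]; simp
      · exact mul_nonneg (hpos j hj).le (sq_nonneg _)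
    have hys : ∀ k, k ≠ i₀ → y k = 0 := by
      intro k hk
      have h0 := (Finset.sum_eq_zero_iff_of_nonneg hterm).mp hy.2 k (Finset.mem_univ k)
      have hy2 : y k ^ 2 = 0 := by
        rcases mul_eq_zero.mp h0 with h | h
        · exact absurd h (hpos k hk).ne'
        · exact h
      exact pow_eq_zero_iff two_ne_zero |>.mp hy2
    have hyi : y i₀ ^ 2 = 1 := by
      have := hy.1
      rwa [sum_single_point i₀ (fun j hj => by rw [hys j hj]; ring)] at this
    have hcases : y i₀ = x i₀ ∨ y i₀ = -x i₀ := by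
      have : (y i₀ - x i₀) * (y i₀ + x i₀) = 0 := by nlinarith
      rcases mul_eq_zero.mp this with h | h
      · left; linarith
      · right; linarith
    rcases hcases with h | h
    · left
      have : y = x := funext fun j => by
        rcases eq_or_ne j i₀ with rfl | hj
        · exact h
        · rw [hys j hj, hxs j hj]
      rw [this]; exact JoinedIn.refl hx
    · right
      have : -y = x := funext fun j => by
        rcases eq_or_ne j i₀ with rfl | hj
        · simp [h]
        · simp [hys j hj, hxs j hj]
      rw [this]; exact JoinedIn.refl hx
  · push_neg at hxs
    obtain ⟨k₁, hk₁, hxk₁⟩ := hxs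
    -- μ i₀ < 0
    have hμi₀ : μ i₀ < 0 := by
      have hsplit : μ i₀ * x i₀ ^ 2 + ∑ j ∈ Finset.univ.erase i₀, μ j * x j ^ 2
          = ∑ j, μ j * x j ^ 2 :=
        Finset.add_sum_erase Finset.univ (fun j => μ j * x j ^ 2) (Finset.mem_univ i₀)
      have hrest : μ k₁ * x k₁ ^ 2 ≤ ∑ j ∈ Finset.univ.erase i₀, μ j * x j ^ 2 := by
        apply Finset.single_le_sum (f := fun j => μ j * x j ^ 2)
        · intro j hj
          exact mul_nonneg (hpos j (Finset.ne_of_mem_erase hj)).le (sq_nonneg _)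
        · exact Finset.mem_erase.mpr ⟨hk₁, Finset.mem_univ k₁⟩
      have hpos1 : 0 < μ k₁ * x k₁ ^ 2 :=
        mul_pos (hpos k₁ hk₁) (by positivity)
      have h2 : μ i₀ * x i₀ ^ 2 < 0 := by
        have htot := hx.2
        rw [← hsplit] at htot
        linarith
      nlinarith [sq_nonneg (x i₀)]
    have hflip : ∀ j, j ≠ i₀ → ∃ u ∈ S μ, u j = 0 := by
      intro j hj
      obtain ⟨k, hki, hkj⟩ := third_index hn (Ne.symm hj : i₀ ≠ j)
      exact exists_mem_zero (Ne.symm hj) hkj hμi₀.le (hpos k hki).le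
    by_cases hsgn : x i₀ * y i₀ < 0
    · right
      apply joined_of_flippable hx (neg_mem_S hy)
      intro i hi
      apply hflip
      intro hix
      subst hix
      simp only [Pi.neg_apply, mul_neg] at hi
      linarith
    · left
      apply joined_of_flippable hx hy
      intro i hi
      apply hflip
      intro hix
      subst hix
      exact hsgn hi

lemma neg_S : S (-μ) = S μ := by
  ext z
  unfold S
  simp only [Set.mem_setOf_eq, Pi.neg_apply, neg_mul, and_congr_right_iff]
  intro _
  rw [Finset.sum_neg_distrib, neg_eq_zero]

lemma joined_or_joined_neg (hn : n ≠ 2) {x y : Fin n → ℝ}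
    (hx : x ∈ S μ) (hy : y ∈ S μ) :
    JoinedIn (S μ) x y ∨ JoinedIn (S μ) x (-y) := by
  classical
  by_cases hall : ∀ i, x i * y i < 0 → ∃ u ∈ S μ, u i = 0
  · exact Or.inl (joined_of_flippable hx hy hall)
  · push_neg at hall
    obtain ⟨i₀, _, hnoflip⟩ := hall
    have hdich : (∀ k, k ≠ i₀ → 0 < μ k) ∨ (∀ k, k ≠ i₀ → 0 < (-μ) k) := by
      by_contra hcon
      push_neg at hcon
      obtain ⟨⟨b, hb, hμb⟩, ⟨a, ha, hμa⟩⟩ := hcon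
      simp only [Pi.neg_apply, not_lt, neg_nonpos] at hμa hμb
      obtain ⟨u, huS, hu0⟩ := exists_mem_zero hb ha hμb hμa
      exact hnoflip u huS hu0
    rcases hdich with hp | hp
    · exact main_pos hn hx hy i₀ hp
    · rw [← neg_S] at hx hy ⊢
      exact main_pos hn hx hy i₀ hp


lemma vecMul_eq_star_mulVec (V : Matrix (Fin n) (Fin n) ℝ) (z : Fin n → ℝ) :
    z ᵥ* V = star V *ᵥ z := by
  funext j
  simp [Matrix.vecMul, Matrix.mulVec, dotProduct, Matrix.star_apply, mul_comm]

lemma quad_eq {C : Matrix (Fin n) (Fin n) ℝ} (hC : C.IsHermitian) (z : Fin n → ℝ) :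
    z ⬝ᵥ C *ᵥ z = ∑ i, hC.eigenvalues i *
      ((star (hC.eigenvectorUnitary : Matrix (Fin n) (Fin n) ℝ)) *ᵥ z) i ^ 2 := by
  set V := (hC.eigenvectorUnitary : Matrix (Fin n) (Fin n) ℝ) with hV
  set w := star V *ᵥ z with hw
  conv_lhs => rw [hC.spectral_theorem, Unitary.conjStarAlgAut_apply, ← hV]
  rw [← Matrix.mulVec_mulVec, ← Matrix.mulVec_mulVec, Matrix.dotProduct_mulVec,
    vecMul_eq_star_mulVec, ← hw]
  rw [RCLike.ofReal_real_eq_id, dotProduct]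
  refine Finset.sum_congr rfl fun i _ => ?_
  rw [Matrix.mulVec_diagonal]
  simp only [Function.comp_apply, id_eq]
  ring

lemma norm_eq {V : Matrix (Fin n) (Fin n) ℝ} (hV : V * star V = 1) (z : Fin n → ℝ) :
    (star V *ᵥ z) ⬝ᵥ (star V *ᵥ z) = z ⬝ᵥ z := by
  rw [Matrix.dotProduct_mulVec, vecMul_eq_star_mulVec, star_star, Matrix.mulVec_mulVec, hV,
    Matrix.one_mulVec]


lemma continuous_mulVec (V : Matrix (Fin n) (Fin n) ℝ) :
    Continuous fun w : Fin n → ℝ => V *ᵥ w := by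
  apply continuous_pi
  intro i
  simp only [Matrix.mulVec, dotProduct]
  exact continuous_finset_sum _ fun j _ => (continuous_const.mul (continuous_apply j))

lemma joined_matrix (hn : n ≠ 2) {C : Matrix (Fin n) (Fin n) ℝ} (hCt : Cᵀ = C)
    {x y : Fin n → ℝ} (hx1 : x ⬝ᵥ x = 1) (hy1 : y ⬝ᵥ y = 1)
    (hq : x ⬝ᵥ C *ᵥ x = y ⬝ᵥ C *ᵥ y) :
    JoinedIn {z : Fin n → ℝ | z ⬝ᵥ z = 1 ∧ z ⬝ᵥ C *ᵥ z = x ⬝ᵥ C *ᵥ x} x y ∨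
    JoinedIn {z : Fin n → ℝ | z ⬝ᵥ z = 1 ∧ z ⬝ᵥ C *ᵥ z = x ⬝ᵥ C *ᵥ x} x (-y) := by
  classical
  have hC : C.IsHermitian := by
    rw [Matrix.IsHermitian]
    ext i j
    rw [Matrix.conjTranspose_apply, star_trivial]
    exact congrFun (congrFun hCt i) j
  set V := (hC.eigenvectorUnitary : Matrix (Fin n) (Fin n) ℝ) with hV
  have hVV : star V * V = 1 := Unitary.coe_star_mul_self _
  have hVV' : V * star V = 1 := Unitary.coe_mul_star_self _
  set c := x ⬝ᵥ C *ᵥ x with hc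
  set μ : Fin n → ℝ := fun i => hC.eigenvalues i - c with hμ
  set T : Set (Fin n → ℝ) := {z | z ⬝ᵥ z = 1 ∧ z ⬝ᵥ C *ᵥ z = c} with hT
  -- dot product as sum of squares
  have dot_sq : ∀ z : Fin n → ℝ, z ⬝ᵥ z = ∑ i, z i ^ 2 := by
    intro z
    rw [dotProduct]
    exact Finset.sum_congr rfl fun i _ => (sq (z i)).symm
  have hmemS : ∀ z : Fin n → ℝ, z ⬝ᵥ z = 1 → z ⬝ᵥ C *ᵥ z = c → star V *ᵥ z ∈ S μ := by
    intro z h1 h2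
    have hn1 : ∑ i, (star V *ᵥ z) i ^ 2 = 1 := by
      rw [← dot_sq, norm_eq hVV', h1]
    constructor
    · exact hn1
    · have := quad_eq hC z
      rw [h2] at this
      have : ∑ i, μ i * (star V *ᵥ z) i ^ 2
          = (∑ i, hC.eigenvalues i * (star V *ᵥ z) i ^ 2) - c * ∑ i, (star V *ᵥ z) i ^ 2 := by
        rw [Finset.mul_sum, ← Finset.sum_sub_distrib]
        exact Finset.sum_congr rfl fun i _ => by rw [hμ]; ring
      rw [this, hn1, ← quad_eq hC z, h2]
      ring
  have hmemT : ∀ w : Fin n → ℝ, w ∈ S μ → V *ᵥ w ∈ T := by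
    intro w hw
    have hrec : star V *ᵥ (V *ᵥ w) = w := by
      rw [Matrix.mulVec_mulVec, hVV, Matrix.one_mulVec]
    have h1 : (V *ᵥ w) ⬝ᵥ (V *ᵥ w) = 1 := by
      have := norm_eq hVV' (V *ᵥ w)
      rw [hrec] at this
      rw [← this, dot_sq, hw.1]
    constructor
    · exact h1
    · rw [quad_eq hC (V *ᵥ w), ← hV, hrec]  -- what shape
      have hsum : ∑ i, hC.eigenvalues i * w i ^ 2
          = ∑ i, μ i * w i ^ 2 + c * ∑ i, w i ^ 2 := by
        rw [Finset.mul_sum, ← Finset.sum_add_distrib]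
        exact Finset.sum_congr rfl fun i _ => by rw [hμ]; ring
      rw [hsum, hw.2, hw.1]
      ring
  have hxS : star V *ᵥ x ∈ S μ := hmemS x hx1 rfl
  have hyS : star V *ᵥ y ∈ S μ := hmemS y hy1 hq.symm
  have hVx : V *ᵥ (star V *ᵥ x) = x := by
    rw [Matrix.mulVec_mulVec, hVV', Matrix.one_mulVec]
  have hVy : V *ᵥ (star V *ᵥ y) = y := by
    rw [Matrix.mulVec_mulVec, hVV', Matrix.one_mulVec]
  rcases joined_or_joined_neg hn hxS hyS with h | h
  · left
    have := (h.map (continuous_mulVec V)).mono (Set.image_subset_iff.mpr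
      (fun w hw => Set.mem_preimage.mpr (hmemT w hw)))
    rwa [hVx, hVy] at this
  · right
    have := (h.map (continuous_mulVec V)).mono (Set.image_subset_iff.mpr
      (fun w hw => Set.mem_preimage.mpr (hmemT w hw)))
    rwa [hVx, Matrix.mulVec_neg, hVy] at this


lemma continuous_quad (M : Matrix (Fin n) (Fin n) ℝ) :
    Continuous fun z : Fin n → ℝ => z ⬝ᵥ M *ᵥ z := by
  simp only [dotProduct, Matrix.mulVec]
  apply continuous_finset_sum
  intro i _
  exact (continuous_apply i).mul
    (continuous_finset_sum _ fun j _ => continuous_const.mul (continuous_apply j))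

lemma quad_neg (M : Matrix (Fin n) (Fin n) ℝ) (y : Fin n → ℝ) :
    (-y) ⬝ᵥ M *ᵥ (-y) = y ⬝ᵥ M *ᵥ y := by
  rw [Matrix.mulVec_neg, dotProduct_neg, neg_dotProduct, neg_neg]


end BrickmanAux

open BrickmanAux in
/-- Brickman's theorem: for `n ≠ 2`, the joint numerical range of two real
symmetric matrices over the unit sphere of `ℝⁿ` is a convex subset of `ℂ`. -/
theorem brickman {n : ℕ} (hn : n ≠ 2) (A B : Matrix (Fin n) (Fin n) ℝ)
    (hA : Aᵀ = A) (hB : Bᵀ = B) :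
    Convex ℝ {w : ℂ | ∃ x : Fin n → ℝ, x ⬝ᵥ x = 1 ∧
      w = ((x ⬝ᵥ A.mulVec x : ℝ) : ℂ) + ((x ⬝ᵥ B.mulVec x : ℝ) : ℂ) * Complex.I} := by
  rintro p ⟨x, hx1, rfl⟩ q ⟨y, hy1, rfl⟩ u v hu hv huv
  set a₁ := x ⬝ᵥ A *ᵥ x with ha₁
  set b₁ := x ⬝ᵥ B *ᵥ x with hb₁
  set a₂ := y ⬝ᵥ A *ᵥ y with ha₂
  set b₂ := y ⬝ᵥ B *ᵥ y with hb₂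
  by_cases hpq : a₁ = a₂ ∧ b₁ = b₂
  · refine ⟨x, hx1, ?_⟩
    rw [← hpq.1, ← hpq.2, ← add_smul, huv, one_smul]
  · set α := b₁ - b₂ with hα
    set β := a₂ - a₁ with hβ
    have hαβ : α ^ 2 + β ^ 2 ≠ 0 := by
      intro h
      apply hpq
      constructor
      · nlinarith [sq_nonneg α, sq_nonneg β]
      · nlinarith [sq_nonneg α, sq_nonneg β]
    set C := α • A + β • B with hC
    have hCt : Cᵀ = C := by
      rw [hC, Matrix.transpose_add, Matrix.transpose_smul, Matrix.transpose_smul, hA, hB]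
    have hqlin : ∀ z : Fin n → ℝ, z ⬝ᵥ C *ᵥ z = α * (z ⬝ᵥ A *ᵥ z) + β * (z ⬝ᵥ B *ᵥ z) := by
      intro z
      rw [hC, Matrix.add_mulVec, dotProduct_add, Matrix.smul_mulVec,
        Matrix.smul_mulVec, dotProduct_smul, dotProduct_smul,
        smul_eq_mul, smul_eq_mul]
    have hq : x ⬝ᵥ C *ᵥ x = y ⬝ᵥ C *ᵥ y := by
      rw [hqlin, hqlin, ← ha₁, ← hb₁, ← ha₂, ← hb₂, hα, hβ]
      ring
    -- get a path to y or -y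
    have key : ∃ y' : Fin n → ℝ, y' ⬝ᵥ A *ᵥ y' = a₂ ∧ y' ⬝ᵥ B *ᵥ y' = b₂ ∧
        JoinedIn {z : Fin n → ℝ | z ⬝ᵥ z = 1 ∧ z ⬝ᵥ C *ᵥ z = x ⬝ᵥ C *ᵥ x} x y' := by
      rcases joined_matrix hn hCt hx1 hy1 hq with h | h
      · exact ⟨y, rfl, rfl, h⟩
      · exact ⟨-y, quad_neg A y, quad_neg B y, h⟩
    obtain ⟨y', hy'A, hy'B, hJ⟩ := key
    obtain ⟨γ, hγ⟩ := hJ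
    set G : ℝ → ℝ := fun t =>
      -β * ((γ.extend t) ⬝ᵥ A *ᵥ (γ.extend t)) + α * ((γ.extend t) ⬝ᵥ B *ᵥ (γ.extend t))
      with hG
    have hGc : Continuous G := by
      apply Continuous.add
      · exact continuous_const.mul ((continuous_quad A).comp γ.continuous_extend)
      · exact continuous_const.mul ((continuous_quad B).comp γ.continuous_extend)
    have hG0 : G 0 = -β * a₁ + α * b₁ := by
      rw [hG]; dsimp only
      rw [Path.extend_zero]
    have hG1 : G 1 = -β * a₂ + α * b₂ := by
      rw [hG]; dsimp only
      rw [Path.extend_one, hy'A, hy'B]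
    set d := u * (-β * a₁ + α * b₁) + v * (-β * a₂ + α * b₂) with hd
    have hdmem : d ∈ Set.uIcc (G 0) (G 1) := by
      rw [hG0, hG1, ← segment_eq_uIcc]
      exact ⟨u, v, hu, hv, huv, by rw [smul_eq_mul, smul_eq_mul]⟩
    obtain ⟨t₀, ht₀, hGt₀⟩ := intermediate_value_uIcc hGc.continuousOn hdmem
    have ht₀' : t₀ ∈ Set.Icc (0:ℝ) 1 := by
      rwa [Set.uIcc_of_le (by norm_num : (0:ℝ) ≤ 1)] at ht₀
    set z := γ.extend t₀ with hz
    have hzT : z ⬝ᵥ z = 1 ∧ z ⬝ᵥ C *ᵥ z = x ⬝ᵥ C *ᵥ x := by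
      rw [hz, Path.extend_apply γ ht₀']
      exact hγ _
    -- solve for the two quadratic values
    set X := z ⬝ᵥ A *ᵥ z with hX
    set Y := z ⬝ᵥ B *ᵥ z with hY
    have e1 : α * X + β * Y = α * (u * a₁ + v * a₂) + β * (u * b₁ + v * b₂) := by
      have h1 : α * X + β * Y = α * a₁ + β * b₁ := by
        linear_combination α * hX + β * hY - α * ha₁ - β * hb₁ - hqlin z + hqlin x + hzT.2
      rw [h1]
      have h2 : α * a₂ + β * b₂ = α * a₁ + β * b₁ := by rw [hα, hβ]; ring
      have h3 : α * (u * a₁ + v * a₂) + β * (u * b₁ + v * b₂)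
          = u * (α * a₁ + β * b₁) + v * (α * a₂ + β * b₂) := by ring
      rw [h3, h2, ← add_mul, huv, one_mul]
    have e2 : -β * X + α * Y = -β * (u * a₁ + v * a₂) + α * (u * b₁ + v * b₂) := by
      have h1 : G t₀ = -β * X + α * Y := by
        rw [hG]
      rw [← h1, hGt₀, hd]; ring
    have hXv : X = u * a₁ + v * a₂ := by
      have h3 : (α ^ 2 + β ^ 2) * (X - (u * a₁ + v * a₂)) = 0 := by linear_combination α * e1 - β * e2
      rcases mul_eq_zero.mp h3 with h | h
      · exact absurd h hαβ
      · linarith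
    have hYv : Y = u * b₁ + v * b₂ := by
      have h3 : (α ^ 2 + β ^ 2) * (Y - (u * b₁ + v * b₂)) = 0 := by linear_combination β * e1 + α * e2
      rcases mul_eq_zero.mp h3 with h | h
      · exact absurd h hαβ
      · linarith
    refine ⟨z, hzT.1, ?_⟩
    rw [← hX, ← hY, hXv, hYv]
    push_cast
    rw [Complex.real_smul, Complex.real_smul]
    ring
end

section
/- Let A and B be 2×2 real symmetric matrices. Then the set E = { xᵀAx + i·xᵀBx : x ∈ ℝ², xᵀx = 1 } equals the boundary of its convex hull; in particular E is the image of the unit circle under a real-quadratic map and is an ellipse, circle, line segment, or point. -/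
open Matrix

/-- The joint numerical range of two `2 × 2` real symmetric matrices over the
unit circle of `ℝ²`. -/
noncomputable def jointRange (A B : Matrix (Fin 2) (Fin 2) ℝ) : Set ℂ :=
  {w : ℂ | ∃ x : Fin 2 → ℝ, x ⬝ᵥ x = 1 ∧
    w = ((x ⬝ᵥ A.mulVec x : ℝ) : ℂ) + ((x ⬝ᵥ B.mulVec x : ℝ) : ℂ) * Complex.I}


open Metric Set

open Matrix Metric Set

namespace JRaux

noncomputable def Lmap (c₁ c₂ : ℂ) : ℂ →ₗ[ℝ] ℂ :=
  Complex.reLm.smulRight c₁ + Complex.imLm.smulRight c₂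

lemma Lmap_apply (c₁ c₂ z : ℂ) : Lmap c₁ c₂ z = z.re • c₁ + z.im • c₂ := rfl

lemma convexHull_sphere : convexHull ℝ (sphere (0:ℂ) 1) = closedBall 0 1 := by
  apply Subset.antisymm
  · exact convexHull_min sphere_subset_closedBall (convex_closedBall _ _)
  · intro z hz
    rw [mem_closedBall_zero_iff] at hz
    rcases eq_or_ne z 0 with rfl | hz0
    · have h1 : (1:ℂ) ∈ sphere (0:ℂ) 1 := by simp
      have h2 : (-1:ℂ) ∈ sphere (0:ℂ) 1 := by simp
      refine segment_subset_convexHull h1 h2 ⟨1/2, 1/2, by norm_num, by norm_num, by norm_num, by norm_num⟩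
    · have hn : ‖z‖ ≠ 0 := norm_ne_zero_iff.2 hz0
      set u : ℂ := ‖z‖⁻¹ • z with hu_def
      have hu : u ∈ sphere (0:ℂ) 1 := by
        simp [mem_sphere_zero_iff_norm, hu_def, norm_smul, abs_of_nonneg (norm_nonneg z),
          inv_mul_cancel₀ hn]
      have hmu : -u ∈ sphere (0:ℂ) 1 := by
        simpa [mem_sphere_zero_iff_norm] using (mem_sphere_zero_iff_norm.1 hu)
      refine segment_subset_convexHull hu hmu
        ⟨(1+‖z‖)/2, (1-‖z‖)/2, by positivity, by linarith, by ring, ?_⟩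
      rw [smul_neg, ← neg_smul, ← add_smul, hu_def, smul_smul]
      have : ((1+‖z‖)/2 + -((1-‖z‖)/2)) = ‖z‖ := by ring
      rw [this, mul_inv_cancel₀ hn, one_smul]

end JRaux

namespace JRaux
open Function

lemma translate_convexHull (c₀ : ℂ) (s : Set ℂ) :
    convexHull ℝ ((fun z => c₀ + z) '' s) = (fun z => c₀ + z) '' convexHull ℝ s := by
  have h := (AffineEquiv.constVAdd ℝ ℂ c₀).toAffineMap.image_convexHull s
  simp only [AffineEquiv.coe_toAffineMap, AffineEquiv.constVAdd_apply, vadd_eq_add] at h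
  exact h.symm

lemma key (c₀ c₁ c₂ : ℂ) :
    (fun z => c₀ + z) '' (Lmap c₁ c₂ '' sphere (0:ℂ) 1) =
      frontier (convexHull ℝ ((fun z => c₀ + z) '' (Lmap c₁ c₂ '' sphere (0:ℂ) 1))) := by
  set L := Lmap c₁ c₂ with hL
  set E : Set ℂ := (fun z => c₀ + z) '' (L '' sphere (0:ℂ) 1) with hE
  have hch : convexHull ℝ E = (fun z => c₀ + z) '' (L '' closedBall (0:ℂ) 1) := by
    rw [hE, translate_convexHull, ← L.image_convexHull, convexHull_sphere]
  by_cases hinj : Function.Injective L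
  · have hsurj := (LinearMap.injective_iff_surjective).1 hinj
    let e : ℂ ≃ₗ[ℝ] ℂ := LinearEquiv.ofBijective L ⟨hinj, hsurj⟩
    let h : ℂ ≃ₜ ℂ := (e.toContinuousLinearEquiv.toHomeomorph).trans (Homeomorph.addLeft c₀)
    have hhs : ∀ s : Set ℂ, (fun z => c₀ + z) '' (L '' s) = h '' s := by
      intro s
      rw [Set.image_image]
      rfl
    rw [hch, hE, hhs, hhs, ← Homeomorph.image_frontier, frontier_closedBall _ one_ne_zero]
  · have hker : ∃ k : ℂ, k ≠ 0 ∧ L k = 0 := by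
      have hne : LinearMap.ker L ≠ ⊥ := fun h => hinj (LinearMap.ker_eq_bot.1 h)
      rcases Submodule.exists_mem_ne_zero_of_ne_bot hne with ⟨k, hk, hk0⟩
      exact ⟨k, hk0, hk⟩
    have himg2 : L '' closedBall (0:ℂ) 1 = L '' sphere (0:ℂ) 1 := by
      apply Subset.antisymm ?_ (Set.image_mono sphere_subset_closedBall)
      rintro - ⟨x, hx, rfl⟩
      rw [mem_closedBall_zero_iff] at hx
      obtain ⟨k, hk0, hLk⟩ := hker
      have hkn : 0 < ‖k‖ := norm_pos_iff.2 hk0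
      set T : ℝ := (1 + ‖x‖) / ‖k‖ with hT_def
      have hT : (0:ℝ) ≤ T := by positivity
      have hcont : ContinuousOn (fun t : ℝ => ‖x + t • k‖) (Icc 0 T) :=
        (continuous_norm.comp (continuous_const.add (continuous_id.smul continuous_const))).continuousOn
      have h0 : ‖x + (0:ℝ) • k‖ ≤ 1 := by simpa using hx
      have hT1 : 1 ≤ ‖x + T • k‖ := by
        have h1 : ‖T • k‖ = T * ‖k‖ := by rw [norm_smul, Real.norm_of_nonneg hT]
        have h2 : T * ‖k‖ = 1 + ‖x‖ := by rw [hT_def, div_mul_cancel₀ _ hkn.ne']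
        have h3 : ‖T • k‖ ≤ ‖x + T • k‖ + ‖x‖ := by
          calc ‖T • k‖ = ‖(x + T • k) - x‖ := by ring_nf
          _ ≤ ‖x + T • k‖ + ‖x‖ := norm_sub_le _ _
        linarith
      obtain ⟨t, _, htn⟩ := intermediate_value_Icc hT hcont ⟨h0, hT1⟩
      refine ⟨x + t • k, mem_sphere_zero_iff_norm.2 htn, ?_⟩
      rw [map_add, LinearMap.map_smul, hLk, smul_zero, add_zero]
    have hEconv : Convex ℝ E := by
      rw [hE, ← himg2]
      exact ((convex_closedBall _ _).linear_image L).translate c₀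
    have hEcomp : IsCompact E :=
      (((isCompact_sphere (0:ℂ) 1).image L.continuous_of_finiteDimensional).image
        (continuous_const.add continuous_id))
    have hint : interior E = ∅ := by
      have hrange : LinearMap.range L ≠ ⊤ := fun h =>
        hinj ((LinearMap.injective_iff_surjective).2 (LinearMap.range_eq_top.1 h))
      have h1 : interior ((LinearMap.range L : Set ℂ)) = ∅ := by
        by_contra h
        exact hrange ((LinearMap.range L).eq_top_of_nonempty_interior' (Set.nonempty_iff_ne_empty.2 h))
      have hsub : E ⊆ (fun z => c₀ + z) '' (LinearMap.range L : Set ℂ) := by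
        rintro - ⟨w, ⟨x, hx, rfl⟩, rfl⟩
        exact ⟨L x, ⟨x, rfl⟩, rfl⟩
      have h2 : interior ((fun z => c₀ + z) '' (LinearMap.range L : Set ℂ)) = ∅ := by
        rw [show (fun z => c₀ + z) '' (LinearMap.range L : Set ℂ)
              = (Homeomorph.addLeft c₀) '' (LinearMap.range L : Set ℂ) from rfl,
          ← Homeomorph.image_interior, h1, Set.image_empty]
      exact Set.eq_empty_of_subset_empty (h2 ▸ interior_mono hsub)
    rw [hEconv.convexHull_eq, hEcomp.isClosed.frontier_eq, hint, Set.diff_empty]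

end JRaux

namespace JRaux

lemma param_eq (c₀ c₁ c₂ : ℂ) :
    {w : ℂ | ∃ θ : ℝ, w = c₀ + c₁ * (Real.cos θ : ℂ) + c₂ * (Real.sin θ : ℂ)} =
      (fun z => c₀ + z) '' (Lmap c₁ c₂ '' sphere (0:ℂ) 1) := by
  ext w
  constructor
  · rintro ⟨θ, rfl⟩
    refine ⟨Lmap c₁ c₂ (Complex.exp (θ * Complex.I)), ⟨Complex.exp (θ * Complex.I), ?_, rfl⟩, ?_⟩
    · rw [mem_sphere_zero_iff_norm, Complex.norm_exp_ofReal_mul_I]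
    · rw [Lmap_apply, Complex.exp_ofReal_mul_I_re, Complex.exp_ofReal_mul_I_im,
        Complex.real_smul, Complex.real_smul]
      ring
  · rintro ⟨-, ⟨z, hz, rfl⟩, rfl⟩
    rw [mem_sphere_zero_iff_norm] at hz
    obtain ⟨θ, hθ⟩ := (Complex.norm_eq_one_iff z).1 hz
    refine ⟨θ, ?_⟩
    rw [← hθ, Lmap_apply, Complex.exp_ofReal_mul_I_re, Complex.exp_ofReal_mul_I_im,
      Complex.real_smul, Complex.real_smul]
    ring

lemma quad_form (a00 a01 a11 c s : ℝ) (h : c*c + s*s = 1) (θ : ℝ)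
    (hc : Real.cos θ = c) (hs : Real.sin θ = s) :
    a00*(c*c) + a01*(s*c) + a01*(c*s) + a11*(s*s)
      = (a00+a11)/2 + (a00-a11)/2 * Real.cos (2*θ) + a01 * Real.sin (2*θ) := by
  rw [Real.cos_two_mul, Real.sin_two_mul, hc, hs]
  linear_combination a11 * h

end JRaux

namespace JRaux

lemma quad_eval (A : Matrix (Fin 2) (Fin 2) ℝ) (x : Fin 2 → ℝ) :
    x ⬝ᵥ A.mulVec x =
      A 0 0 * (x 0 * x 0) + A 0 1 * (x 1 * x 0) + A 1 0 * (x 0 * x 1) + A 1 1 * (x 1 * x 1) := by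
  simp [dotProduct, Matrix.mulVec, Fin.sum_univ_two]
  ring

end JRaux

open JRaux in
theorem jointRange_two_dim (A B : Matrix (Fin 2) (Fin 2) ℝ)
    (hA : Aᵀ = A) (hB : Bᵀ = B) :
    jointRange A B = frontier (convexHull ℝ (jointRange A B)) ∧
    ∃ c₀ c₁ c₂ : ℂ, jointRange A B =
      {w : ℂ | ∃ θ : ℝ, w = c₀ + c₁ * (Real.cos (2 * θ) : ℂ) + c₂ * (Real.sin (2 * θ) : ℂ)} := by
  have hA10 : A 1 0 = A 0 1 := by rw [← Matrix.transpose_apply A 0 1, hA]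
  have hB10 : B 1 0 = B 0 1 := by rw [← Matrix.transpose_apply B 0 1, hB]
  set c₀ : ℂ := ⟨(A 0 0 + A 1 1)/2, (B 0 0 + B 1 1)/2⟩ with hc₀
  set c₁ : ℂ := ⟨(A 0 0 - A 1 1)/2, (B 0 0 - B 1 1)/2⟩ with hc₁
  set c₂ : ℂ := ⟨A 0 1, B 0 1⟩ with hc₂
  have hmain : jointRange A B =
      {w : ℂ | ∃ θ : ℝ, w = c₀ + c₁ * (Real.cos (2 * θ) : ℂ) + c₂ * (Real.sin (2 * θ) : ℂ)} := by
    ext w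
    simp only [jointRange, Set.mem_setOf_eq]
    constructor
    · rintro ⟨x, hx, rfl⟩
      have hx' : x 0 * x 0 + x 1 * x 1 = 1 := by
        simpa [dotProduct, Fin.sum_univ_two] using hx
      set z : ℂ := ⟨x 0, x 1⟩ with hz
      have habs : ‖z‖ = 1 := by
        have h2 : ‖z‖ ^ 2 = 1 := by
          rw [Complex.sq_norm, Complex.normSq_apply]
          simpa [hz] using hx'
        nlinarith [norm_nonneg z]
      obtain ⟨θ, hθ⟩ := (Complex.norm_eq_one_iff z).1 habs
      have hre : Real.cos θ = x 0 := by
        have h := congrArg Complex.re hθ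
        simpa [Complex.exp_ofReal_mul_I_re, hz] using h
      have him : Real.sin θ = x 1 := by
        have h := congrArg Complex.im hθ
        simpa [Complex.exp_ofReal_mul_I_im, hz] using h
      refine ⟨θ, ?_⟩
      apply Complex.ext
      · simp only [Complex.add_re, Complex.mul_re, Complex.ofReal_re, Complex.ofReal_im,
          Complex.I_re, Complex.I_im, Complex.mul_im, hc₀, hc₁, hc₂]
        rw [quad_eval, hA10]
        have := quad_form (A 0 0) (A 0 1) (A 1 1) (x 0) (x 1) hx' θ hre him
        simp only [mul_zero, zero_mul, sub_zero, add_zero, zero_sub, neg_zero] at *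
        linarith [this]
      · simp only [Complex.add_im, Complex.mul_re, Complex.ofReal_re, Complex.ofReal_im,
          Complex.I_re, Complex.I_im, Complex.mul_im, hc₀, hc₁, hc₂]
        rw [quad_eval, hB10]
        have := quad_form (B 0 0) (B 0 1) (B 1 1) (x 0) (x 1) hx' θ hre him
        simp only [mul_zero, zero_mul, sub_zero, add_zero, mul_one, zero_add] at *
        linarith [this]
    · rintro ⟨θ, rfl⟩
      refine ⟨![Real.cos θ, Real.sin θ], ?_, ?_⟩
      · simp [dotProduct, Fin.sum_univ_two]
        nlinarith [Real.sin_sq_add_cos_sq θ]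
      · have hx' : Real.cos θ * Real.cos θ + Real.sin θ * Real.sin θ = 1 := by
          nlinarith [Real.sin_sq_add_cos_sq θ]
        apply Complex.ext
        · simp only [Complex.add_re, Complex.mul_re, Complex.ofReal_re, Complex.ofReal_im,
            Complex.I_re, Complex.I_im, Complex.mul_im, hc₀, hc₁, hc₂]
          rw [quad_eval, hA10]
          simp only [Matrix.cons_val_zero, Matrix.cons_val_one, Matrix.head_cons]
          have := quad_form (A 0 0) (A 0 1) (A 1 1) (Real.cos θ) (Real.sin θ) hx' θ rfl rfl
          simp only [mul_zero, zero_mul, sub_zero, add_zero, zero_sub, neg_zero] at *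
          linarith [this]
        · simp only [Complex.add_im, Complex.mul_re, Complex.ofReal_re, Complex.ofReal_im,
            Complex.I_re, Complex.I_im, Complex.mul_im, hc₀, hc₁, hc₂]
          rw [quad_eval, hB10]
          simp only [Matrix.cons_val_zero, Matrix.cons_val_one, Matrix.head_cons]
          have := quad_form (B 0 0) (B 0 1) (B 1 1) (Real.cos θ) (Real.sin θ) hx' θ rfl rfl
          simp only [mul_zero, zero_mul, sub_zero, add_zero, mul_one, zero_add] at *
          linarith [this]
  refine ⟨?_, c₀, c₁, c₂, hmain⟩
  rw [hmain]
  have hSt : {w : ℂ | ∃ θ : ℝ, w = c₀ + c₁ * (Real.cos (2 * θ) : ℂ) + c₂ * (Real.sin (2 * θ) : ℂ)}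
      = {w : ℂ | ∃ t : ℝ, w = c₀ + c₁ * (Real.cos t : ℂ) + c₂ * (Real.sin t : ℂ)} := by
    ext w
    constructor
    · rintro ⟨θ, rfl⟩; exact ⟨2 * θ, rfl⟩
    · rintro ⟨t, rfl⟩; exact ⟨t / 2, by rw [show 2 * (t / 2) = t by ring]⟩
  rw [hSt, param_eq]
  exact key c₀ c₁ c₂
end

section
/- Let T be an n×n complex matrix, α ∈ ℝ, and γ ∈ ℂ. If |γ − α| > ‖T − αI‖ (operator norm), then γ ∉ SRG(T), where SRG(T) = { (‖Tx‖/‖x‖)·exp(±i·arccos(Re⟨Tx,x⟩/(‖Tx‖·‖x‖))) : ‖x‖ = 1, Tx ≠ 0 }. -/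
open scoped InnerProductSpace
open Matrix

/-- The scaled relative graph (SRG) of an `n × n` complex matrix `T`:
the polar points of all input-output pairs `(x, Tx)` with `‖x‖ = 1` and `Tx ≠ 0`
(both sign choices of the angle). -/
lemma abs_aux (r α θ : ℝ) :
    ‖(r:ℂ) * Complex.exp (Complex.I * θ) - α‖^2
      = r^2 - 2*α*r*Real.cos θ + α^2 := by
  rw [mul_comm Complex.I, Complex.exp_mul_I, Complex.sq_norm, Complex.normSq_apply]
  simp only [Complex.sub_re, Complex.sub_im, Complex.mul_re, Complex.mul_im,
    Complex.add_re, Complex.add_im, Complex.ofReal_re, Complex.ofReal_im,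
    Complex.cos_ofReal_re, Complex.cos_ofReal_im, Complex.sin_ofReal_re,
    Complex.sin_ofReal_im, Complex.I_re, Complex.I_im, Complex.mul_I_re, Complex.mul_I_im]
  nlinarith [Real.sin_sq_add_cos_sq θ]

noncomputable def srg {n : ℕ} (T : Matrix (Fin n) (Fin n) ℂ) : Set ℂ :=
  {w : ℂ | ∃ x : EuclideanSpace ℂ (Fin n), ‖x‖ = 1 ∧
    Matrix.toEuclideanLin T x ≠ 0 ∧
    (w = ((‖Matrix.toEuclideanLin T x‖ / ‖x‖ : ℝ) : ℂ) *
        Complex.exp (Complex.I * (Real.arccos ((⟪x, Matrix.toEuclideanLin T x⟫_ℂ).re /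
          (‖Matrix.toEuclideanLin T x‖ * ‖x‖)) : ℝ)) ∨
     w = ((‖Matrix.toEuclideanLin T x‖ / ‖x‖ : ℝ) : ℂ) *
        Complex.exp (-(Complex.I * (Real.arccos ((⟪x, Matrix.toEuclideanLin T x⟫_ℂ).re /
          (‖Matrix.toEuclideanLin T x‖ * ‖x‖)) : ℝ))))}

theorem not_mem_srg_of_lt_dist {n : ℕ} (T : Matrix (Fin n) (Fin n) ℂ) (α : ℝ) (γ : ℂ)
    (h : ‖γ - (α : ℂ)‖ >
      ‖Matrix.toEuclideanCLM (𝕜 := ℂ) (T - (α : ℂ) • (1 : Matrix (Fin n) (Fin n) ℂ))‖) :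
    γ ∉ srg T := by
  rintro ⟨x, hx, hTx, hw⟩
  set y := Matrix.toEuclideanLin T x with hy
  set r := ‖y‖ with hrdef
  set c := (⟪x, y⟫_ℂ).re with hc
  have hr : 0 < r := norm_pos_iff.mpr hTx
  have hcs : |c| ≤ r := by
    calc |c| ≤ ‖⟪x, y⟫_ℂ‖ := Complex.abs_re_le_norm _
      _ ≤ ‖x‖ * ‖y‖ := by exact norm_inner_le_norm x y
      _ = r := by rw [hx, one_mul]
  have hb1 : -1 ≤ c / r := by
    rw [neg_le, ← neg_div, div_le_one hr]; linarith [(abs_le.mp hcs).1]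
  have hb2 : c / r ≤ 1 := (div_le_one hr).mpr (abs_le.mp hcs).2
  have hcos : Real.cos (Real.arccos (c / (r * ‖x‖))) = c / r := by
    rw [hx, mul_one]; exact Real.cos_arccos hb1 hb2
  have key : ∀ θ : ℝ, Real.cos θ = c / r →
      ‖(r:ℂ) * Complex.exp (Complex.I * θ) - α‖^2 = r^2 - 2*α*c + α^2 := by
    intro θ hθ
    rw [abs_aux, hθ]
    field_simp
  have habs : ‖γ - α‖^2 = r^2 - 2*α*c + α^2 := by
    have hcoef : ((r / ‖x‖ : ℝ) : ℂ) = (r : ℂ) := by rw [hx, div_one]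
    rcases hw with hw | hw
    · rw [hw, hcoef]
      exact key _ hcos
    · rw [hw, hcoef, show -(Complex.I * (Real.arccos (c / (r * ‖x‖)) : ℝ))
          = Complex.I * ((-Real.arccos (c / (r * ‖x‖)) : ℝ) : ℂ) by push_cast; ring]
      exact key _ (by rw [Real.cos_neg]; exact hcos)
  have happ : Matrix.toEuclideanCLM (𝕜 := ℂ) (T - (α:ℂ) • 1) x = y - (α:ℂ) • x := by
    have h1 : Matrix.toEuclideanCLM (𝕜 := ℂ) (T - (α:ℂ) • 1) x
        = Matrix.toEuclideanLin (T - (α:ℂ) • 1) x :=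
      DFunLike.congr_fun (Matrix.coe_toEuclideanCLM_eq_toEuclideanLin (𝕜 := ℂ)
        (A := T - (α:ℂ) • 1)) x
    rw [h1, map_sub, _root_.map_smul]
    simp [Matrix.toEuclideanLin, hy]
  have hnorm : ‖Matrix.toEuclideanCLM (𝕜 := ℂ) (T - (α:ℂ) • 1) x‖^2 = r^2 - 2*α*c + α^2 := by
    rw [happ, @norm_sub_sq ℂ, inner_smul_right, RCLike.mul_re]
    have hre : (⟪y, x⟫_ℂ).re = c := by rw [hc]; exact inner_re_symm (𝕜 := ℂ) y x
    simp only [RCLike.ofReal_re, RCLike.ofReal_im, zero_mul, sub_zero, RCLike.re_to_complex,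
      RCLike.im_to_complex, Complex.ofReal_re, Complex.ofReal_im, zero_mul, mul_zero,
      hre, norm_smul, Complex.norm_real, Real.norm_eq_abs, mul_pow, sq_abs, hx, mul_one]
    ring
  have heq : ‖γ - α‖ = ‖Matrix.toEuclideanCLM (𝕜 := ℂ) (T - (α:ℂ) • 1) x‖ := by
    have h2 := congrArg Real.sqrt (habs.trans hnorm.symm)
    rwa [Real.sqrt_sq (norm_nonneg _), Real.sqrt_sq (norm_nonneg _)] at h2
  have hle := (Matrix.toEuclideanCLM (𝕜 := ℂ) (T - (α:ℂ) • 1)).le_opNorm x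
  rw [hx, mul_one] at hle
  rw [heq] at h
  linarith
end
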